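/- Determinant of a Cauchy matrix: det C_{s,t} = ∏_{i<j} (s_j − s_i)(t_i − t_j) / ∏_{i,j} (s_i − t_j). -/

import Mathlib

open Matrix Finset

lemma Iio_zero_fin {n : ℕ} : Finset.Iio (0 : Fin (n+1)) = ∅ := by
  ext i; simp [Fin.pos_iff_ne_zero]

lemma prod_Iio_fin {n : ℕ} (c : Fin n) (g : Fin n → ℂ) :
    ∏ i ∈ Finset.Iio c, g i = ∏ i : Fin n, if i < c then g i else 1 := by
  rw [← Finset.prod_filter]
  congr 1
  ext i; simp

lemma prod_Iio_succ_split {n : ℕ} (f : Fin (n+1) → Fin (n+1) → ℂ) :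
    ∏ j : Fin (n+1), ∏ i ∈ Finset.Iio j, f i j
      = (∏ j : Fin n, f 0 j.succ) * ∏ j : Fin n, ∏ i ∈ Finset.Iio j, f i.succ j.succ := by
  rw [Fin.prod_univ_succ, Iio_zero_fin]
  simp only [Finset.prod_empty, one_mul]
  rw [← Finset.prod_mul_distrib]
  apply Finset.prod_congr rfl
  intro j _
  rw [prod_Iio_fin, prod_Iio_fin, Fin.prod_univ_succ]
  simp only [Fin.succ_pos, if_true, Fin.succ_lt_succ_iff]

lemma cauchy_det_aux : ∀ (n : ℕ) (s t : Fin n → ℂ), (∀ i j, s i ≠ t j) →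
    (Matrix.of fun i j => 1 / (s i - t j)).det =
      (∏ j : Fin n, ∏ i ∈ Finset.Iio j, ((s j - s i) * (t i - t j))) /
        ∏ i : Fin n, ∏ j : Fin n, (s i - t j) := by
  intro n
  induction n with
  | zero => intro s t _; simp [Matrix.det_fin_zero]
  | succ n ih =>
    intro s t hst
    have hne : ∀ i j, s i - t j ≠ 0 := fun i j => sub_ne_zero.mpr (hst i j)
    set C : Matrix (Fin (n+1)) (Fin (n+1)) ℂ := Matrix.of fun i j => 1 / (s i - t j) with hCdef
    -- column operation matrix
    set E : Matrix (Fin (n+1)) (Fin (n+1)) ℂ := Matrix.of fun k j =>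
      if k = j then 1 else if k = 0 then -((s 0 - t 0) / (s 0 - t j)) else 0 with hEdef
    have hEtri : E.BlockTriangular id := by
      intro i j hij
      simp only [hEdef, Matrix.of_apply, id] at *
      rw [if_neg (ne_of_gt hij), if_neg]
      rintro rfl
      exact absurd hij (Fin.not_lt_zero j)
    have hEdet : E.det = 1 := by
      rw [Matrix.det_of_upperTriangular hEtri]
      simp [hEdef]
    set D := C * E with hDdef
    have hDdet : D.det = C.det := by rw [hDdef, Matrix.det_mul, hEdet, mul_one]
    have hD : ∀ i j, D i j = if j = 0 then 1 / (s i - t 0)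
        else ((s 0 - s i) * (t j - t 0)) / ((s i - t j) * ((s 0 - t j) * (s i - t 0))) := by
      intro i j
      rw [hDdef, Matrix.mul_apply]
      by_cases hj : j = 0
      · subst hj
        rw [Finset.sum_eq_single 0]
        · simp [hEdef, hCdef]
        · intro k _ hk
          simp [hEdef, hCdef, hk, Ne.symm hk]
        · simp
      · rw [if_neg hj]
        rw [Finset.sum_eq_add_of_mem 0 j (Finset.mem_univ _) (Finset.mem_univ _) (Ne.symm hj)]
        · simp only [hEdef, hCdef, Matrix.of_apply, if_neg (Ne.symm hj), if_pos rfl,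
            if_pos rfl, if_true]
          have h1 := hne i j
          have h2 := hne 0 j
          have h3 := hne i 0
          field_simp
          ring
        · intro k _ hk
          simp only [hEdef, Matrix.of_apply, if_neg hk.2, if_neg hk.1, mul_zero]
    -- expand along row 0
    have hsucc : (0 : Fin (n+1)).succAbove = Fin.succ := Fin.succAbove_zero
    have hDexp : D.det = D 0 0 * (D.submatrix Fin.succ Fin.succ).det := by
      rw [Matrix.det_succ_row_zero]
      rw [Finset.sum_eq_single 0]
      · simp [hsucc]
      · intro j _ hjne
        rw [hD 0 j, if_neg hjne]
        simp
      · simp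
    set r : Fin n → ℂ := fun i => (s 0 - s i.succ) / (s i.succ - t 0) with hr
    set c : Fin n → ℂ := fun j => (t j.succ - t 0) / (s 0 - t j.succ) with hc
    have hM : (D.submatrix Fin.succ Fin.succ).det
        = (∏ i, r i) * ((∏ j, c j) * (Matrix.of fun i j : Fin n =>
            1 / (s i.succ - t j.succ)).det) := by
      have : D.submatrix Fin.succ Fin.succ = Matrix.of (fun i j : Fin n =>
          r i * Matrix.of (fun i j : Fin n =>
            c j * (Matrix.of fun i j : Fin n => 1 / (s i.succ - t j.succ)) i j) i j) := by
        ext i j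
        simp only [Matrix.submatrix_apply, Matrix.of_apply]
        rw [hD, if_neg (Fin.succ_ne_zero j), hr, hc]
        have h1 := hne i.succ j.succ
        have h2 := hne 0 j.succ
        have h3 := hne i.succ 0
        field_simp
        all_goals ring_nf
        all_goals tauto
      rw [this, Matrix.det_mul_column, Matrix.det_mul_row]
    have hih := ih (fun i => s i.succ) (fun j => t j.succ) (fun i j => hst _ _)
    -- assemble
    rw [← hDdet, hDexp, hM, hih, hD 0 0, if_pos rfl]
    rw [prod_Iio_succ_split (fun i j => (s j - s i) * (t i - t j))]
    rw [Fin.prod_univ_succ (f := fun i => ∏ j : Fin (n+1), (s i - t j))]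
    rw [Fin.prod_univ_succ (f := fun j => (s 0 - t j))]
    conv_rhs => rw [show (∏ i : Fin n, ∏ j : Fin (n+1), (s i.succ - t j))
        = ∏ i : Fin n, ((s i.succ - t 0) * ∏ j : Fin n, (s i.succ - t j.succ)) from
      Finset.prod_congr rfl fun i _ => Fin.prod_univ_succ _]
    rw [show (∏ j : Fin n, (s j.succ - s 0) * (t 0 - t j.succ))
        = ∏ j : Fin n, (s 0 - s j.succ) * (t j.succ - t 0) from
      Finset.prod_congr rfl fun j _ => by ring]
    rw [Finset.prod_mul_distrib, Finset.prod_mul_distrib]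
    simp only [hr, hc]
    rw [Finset.prod_div_distrib, Finset.prod_div_distrib]
    have hd := hne 0 0
    have hB : (∏ i : Fin n, (s i.succ - t 0)) ≠ 0 :=
      Finset.prod_ne_zero_iff.mpr fun i _ => hne _ _
    have hDq : (∏ j : Fin n, (s 0 - t j.succ)) ≠ 0 :=
      Finset.prod_ne_zero_iff.mpr fun j _ => hne _ _
    have hDe : (∏ i : Fin n, ∏ j : Fin n, (s i.succ - t j.succ)) ≠ 0 :=
      Finset.prod_ne_zero_iff.mpr fun i _ => Finset.prod_ne_zero_iff.mpr fun j _ => hne _ _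
    field_simp

theorem cauchy_det (n : ℕ) (s t : Fin n → ℂ) (hst : ∀ i j, s i ≠ t j)
    (C : Matrix (Fin n) (Fin n) ℂ) (hC : ∀ i j, C i j = 1 / (s i - t j)) :
    C.det =
      (∏ j : Fin n, ∏ i ∈ Finset.Iio j, ((s j - s i) * (t i - t j))) /
        ∏ i : Fin n, ∏ j : Fin n, (s i - t j) := by
  have : C = Matrix.of fun i j => 1 / (s i - t j) := by
    ext i j; exact hC i j
  rw [this]
  exact cauchy_det_aux n s t hst
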